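/- arXiv:1208.1513 — 4 statements merged into one kernel-verified Lean document; each statement's English description precedes it below -/
import Mathlib

section
/- Given a family of manifolds M₁,...,M_N and smooth maps s_j : ∏_i M_i → M_j × U_j with pr₁ ∘ s_j = pr_j (the j-th projection of the product), the interconnection map I, defined componentwise by I(F₁,...,F_N)_j := F_j ∘ s_j, is a well-defined linear map from ∏_j Control(M_j × U_j → M_j) to the space of vector fields Γ(T(∏_i M_i)), i.e. for every (F₁,...,F_N), the map x ↦ (F_j(s_j(x)))_j is a vector field on ∏_i M_i. -/
open Manifold Topology

open Bundle Set in
lemma triv_pi_tangent {ι : Type} [Fintype ι]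
    (E : ι → Type) [∀ i, NormedAddCommGroup (E i)] [∀ i, NormedSpace ℝ (E i)]
    (H : ι → Type) [∀ i, TopologicalSpace (H i)]
    (I : ∀ i, ModelWithCorners ℝ (E i) (H i))
    (M : ι → Type) [∀ i, TopologicalSpace (M i)] [∀ i, ChartedSpace (H i) (M i)]
    [∀ i, IsManifold (I i) (⊤ : ℕ∞) (M i)]
    [IsManifold (ModelWithCorners.pi I) (⊤ : ℕ∞) (∀ i, M i)]
    (x₀ x : ∀ i, M i) (hx : ∀ j, x j ∈ (chartAt (H j) (x₀ j)).source) (v : ∀ j, E j) :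
    (trivializationAt (∀ j, E j) (TangentSpace (ModelWithCorners.pi I)) x₀ ⟨x, v⟩).2 =
      fun j => (trivializationAt (E j) (TangentSpace (I j)) (x₀ j) ⟨x j, v j⟩).2 := by
  have hd : ∀ j, DifferentiableWithinAt ℝ
      ((chartAt (H j) (x₀ j)).extend (I j) ∘ ((chartAt (H j) (x j)).extend (I j)).symm)
      (range (I j)) ((chartAt (H j) (x j)).extend (I j) (x j)) := fun j =>
    (OpenPartialHomeomorph.contDiffWithinAt_extend_coord_change' (n := ((⊤ : ℕ∞) : WithTop ℕ∞)) (IsManifold.chart_mem_maximalAtlas _)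
      (IsManifold.chart_mem_maximalAtlas _) (mem_chart_source _ _) (hx j)).differentiableWithinAt (by simp)
  set D : ∀ j, E j →L[ℝ] E j := fun j =>
    fderivWithin ℝ
      ((chartAt (H j) (x₀ j)).extend (I j) ∘ ((chartAt (H j) (x j)).extend (I j)).symm)
      (range (I j)) ((chartAt (H j) (x j)).extend (I j) (x j)) with hD
  have hP : (fun j => (chartAt (H j) (x j)).extend (I j) (x j)) ∈
      range (ModelWithCorners.pi I) := ⟨fun j => chartAt (H j) (x j) (x j), rfl⟩
  have hmaps : ∀ j, MapsTo (fun y : ∀ i, E i => y j)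
      (range (ModelWithCorners.pi I)) (range (I j)) := by
    rintro j y ⟨w, rfl⟩
    exact mem_range_self _
  have key : HasFDerivWithinAt
      ((chartAt (ModelPi H) x₀).extend (ModelWithCorners.pi I) ∘
        ((chartAt (ModelPi H) x).extend (ModelWithCorners.pi I)).symm)
      (ContinuousLinearMap.pi fun j => (D j).comp (ContinuousLinearMap.proj j))
      (range (ModelWithCorners.pi I)) (fun j => (chartAt (H j) (x j)).extend (I j) (x j)) := by
    rw [hasFDerivWithinAt_pi']
    intro j
    have h1 : HasFDerivWithinAt
        ((chartAt (H j) (x₀ j)).extend (I j) ∘ ((chartAt (H j) (x j)).extend (I j)).symm)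
        (D j) (range (I j)) ((chartAt (H j) (x j)).extend (I j) (x j)) :=
      (hd j).hasFDerivWithinAt
    have h2 := h1.comp (fun j' => (chartAt (H j') (x j')).extend (I j') (x j'))
      ((ContinuousLinearMap.proj (R := ℝ) (φ := E) j).hasFDerivWithinAt) (hmaps j)
    exact h2
  have huniq : UniqueDiffWithinAt ℝ (range (ModelWithCorners.pi I))
      (fun j => (chartAt (H j) (x j)).extend (I j) (x j)) :=
    (ModelWithCorners.pi I).uniqueDiffOn _ hP
  have hfd := key.fderivWithin huniq
  have heq : (trivializationAt (∀ j, E j) (TangentSpace (ModelWithCorners.pi I)) x₀ ⟨x, v⟩).2 =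
      (fderivWithin ℝ
        ((chartAt (ModelPi H) x₀).extend (ModelWithCorners.pi I) ∘
          ((chartAt (ModelPi H) x).extend (ModelWithCorners.pi I)).symm)
        (range (ModelWithCorners.pi I)) (fun j => (chartAt (H j) (x j)).extend (I j) (x j))) v := rfl
  rw [heq, hfd]
  rfl

/-- Given a finite family of manifolds `M i` (with control manifolds `U i`)
and smooth maps `s j : ∏ i, M i → M j × U j` with `pr₁ ∘ s j = pr_j`, the interconnection
map `I`, defined componentwise by `I(F)_j := F j ∘ s j`, is a well-defined linear map from
`∏ j, Control (M j × U j → M j)` to the vector fields on `∏ i, M i`: it is linear, and for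
every tuple `F` of smooth open systems the map `x ↦ (F j (s j x))_j` is a (smooth) vector
field on `∏ i, M i`. -/
theorem interconnection_well_defined {ι : Type} [Fintype ι]
    (E : ι → Type) [∀ i, NormedAddCommGroup (E i)] [∀ i, NormedSpace ℝ (E i)]
    (H : ι → Type) [∀ i, TopologicalSpace (H i)]
    (I : ∀ i, ModelWithCorners ℝ (E i) (H i))
    (M : ι → Type) [∀ i, TopologicalSpace (M i)] [∀ i, ChartedSpace (H i) (M i)]
    [∀ i, IsManifold (I i) (⊤ : ℕ∞) (M i)]
    -- the control manifolds U i
    (F' : ι → Type) [∀ i, NormedAddCommGroup (F' i)] [∀ i, NormedSpace ℝ (F' i)]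
    (K : ι → Type) [∀ i, TopologicalSpace (K i)]
    (J : ∀ i, ModelWithCorners ℝ (F' i) (K i))
    (U : ι → Type) [∀ i, TopologicalSpace (U i)] [∀ i, ChartedSpace (K i) (U i)]
    [∀ i, IsManifold (J i) (⊤ : ℕ∞) (U i)]
    [IsManifold (ModelWithCorners.pi I) (⊤ : ℕ∞) (∀ i, M i)]
    -- the interconnection data s_j
    (s : ∀ j : ι, (∀ i, M i) → M j × U j)
    (hs : ∀ j, ContMDiff (ModelWithCorners.pi I) ((I j).prod (J j)) (⊤ : ℕ∞) (s j))
    (hs1 : ∀ j x, (s j x).1 = x j) :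
    ∃ Int : (∀ j : ι, (M j × U j → E j)) →ₗ[ℝ] ((∀ i, M i) → ∀ j, E j),
      (∀ F : ∀ j : ι, M j × U j → E j, Int F = fun x j => F j (s j x)) ∧
      ∀ F : ∀ j : ι, M j × U j → E j,
        (∀ j, ContMDiff ((I j).prod (J j)) (I j).tangent (⊤ : ℕ∞)
            (fun q => (⟨q.1, F j q⟩ : TangentBundle (I j) (M j)))) →
          ContMDiff (ModelWithCorners.pi I) (ModelWithCorners.pi I).tangent (⊤ : ℕ∞)
            (fun x => (⟨x, fun j => F j (s j x)⟩ :
              TangentBundle (ModelWithCorners.pi I) (∀ i, M i))) := by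
  refine ⟨{ toFun := fun F x j => F j (s j x),
            map_add' := fun F G => rfl, map_smul' := fun c F => rfl },
    fun F => rfl, ?_⟩
  intro F hF x₀
  refine (Bundle.contMDiffAt_section (E := TangentSpace (ModelWithCorners.pi I))
    (s := fun x j => F j (s j x)) x₀).2 ?_
  have hg : ∀ j, ContMDiffAt (ModelWithCorners.pi I) 𝓘(ℝ, E j) (⊤ : ℕ∞)
      (fun x => (trivializationAt (E j) (TangentSpace (I j)) (x₀ j)
        ⟨x j, F j (s j x)⟩).2) x₀ := by
    intro j
    have h0 : ContMDiff (ModelWithCorners.pi I) (I j).tangent (⊤ : ℕ∞)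
        (fun x => (⟨(s j x).1, F j (s j x)⟩ : TangentBundle (I j) (M j))) :=
      (hF j).comp (hs j)
    have heq : (fun x => (⟨(s j x).1, F j (s j x)⟩ : TangentBundle (I j) (M j))) =
        (fun x => (⟨x j, F j (s j x)⟩ : TangentBundle (I j) (M j))) := by
      funext x
      rw [hs1]
    rw [heq] at h0
    have h1 := (Bundle.contMDiffAt_totalSpace
      (f := fun x => (⟨x j, F j (s j x)⟩ : TangentBundle (I j) (M j))) (x₀ := x₀)).1 (h0 x₀)
    exact h1.2
  have hmem : ∀ᶠ x in 𝓝 x₀,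
      (trivializationAt (∀ j, E j) (TangentSpace (ModelWithCorners.pi I)) x₀
        ⟨x, fun j => F j (s j x)⟩).2 =
      (fun j => (trivializationAt (E j) (TangentSpace (I j)) (x₀ j)
        ⟨x j, F j (s j x)⟩).2) := by
    filter_upwards [(chartAt (ModelPi H) x₀).open_source.mem_nhds (mem_chart_source _ x₀)]
      with x hx
    exact triv_pi_tangent E H I M x₀ x (fun j => hx j (Set.mem_univ j)) _
  exact (contMDiffAt_pi_space.2 hg).congr_of_eventuallyEq hmem
end

section
/- Let (G,P) be a network of manifolds. Then there is a linear interconnection map I : ∏_{a∈G₀} Control(P I(a) → P(a)) → Γ(T(PG)) uniquely characterized by the property that for every vertex a and every tuple w = (w_b)_{b∈G₀}, the a-component of the vector field I(w) at a point x ∈ PG equals w_a evaluated at Pξ_a(x); i.e. D(Pι_a) ∘ I(w) = w_a ∘ Pξ_a. -/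
/-- A finite directed multigraph. -/
structure NetGraph where
  V : Type
  E : Type
  [fV : Fintype V]
  [fE : Fintype E]
  [dV : DecidableEq V]
  [dE : DecidableEq E]
  s : E → V
  t : E → V

attribute [instance] NetGraph.fV NetGraph.fE NetGraph.dV NetGraph.dE

/-- A map of directed graphs. -/
@[ext]
structure GraphHom (G G' : NetGraph) where
  vmap : G.V → G'.V
  emap : G.E → G'.E
  src : ∀ e, vmap (G.s e) = G'.s (emap e)
  tgt : ∀ e, vmap (G.t e) = G'.t (emap e)

/-- Identity graph map. -/
def GraphHom.id (G : NetGraph) : GraphHom G G :=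
  ⟨fun a => a, fun e => e, fun _ => rfl, fun _ => rfl⟩

/-- Composition of graph maps. -/
def GraphHom.comp {G G' G'' : NetGraph} (ψ : GraphHom G' G'') (φ : GraphHom G G') :
    GraphHom G G'' :=
  ⟨fun a => ψ.vmap (φ.vmap a), fun e => ψ.emap (φ.emap e),
   fun e => (congrArg ψ.vmap (φ.src e)).trans (ψ.src _),
   fun e => (congrArg ψ.vmap (φ.tgt e)).trans (ψ.tgt _)⟩

/-- The map on total phase spaces induced by a graph map (`ℙφ`),
given a phase space function `P'` on the codomain graph; the phase space
function on the domain is `P' ∘ φ.vmap`. -/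
def Pmap {G G' : NetGraph} (P' : G'.V → Type _) (φ : GraphHom G G') :
    (∀ a' : G'.V, P' a') → ∀ a : G.V, P' (φ.vmap a) :=
  fun x a => x (φ.vmap a)

/-- The input tree `I(a)` of a vertex `a`: vertices are `a` (the `Sum.inl` vertex)
together with the edges of `G` targeting `a`; edges are the pairs `(a, γ)` with
`t γ = a`, going from `γ` to `a`. -/
@[reducible] def NetGraph.inputTree (G : NetGraph) (a : G.V) : NetGraph where
  V := Unit ⊕ {e : G.E // G.t e = a}
  E := {e : G.E // G.t e = a}
  s := fun e => Sum.inr e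
  t := fun _ => Sum.inl ()

/-- The canonical graph map `ξ_a : I(a) → G`. -/
def NetGraph.xi (G : NetGraph) (a : G.V) : GraphHom (G.inputTree a) G where
  vmap := fun v => match v with
    | Sum.inl _ => a
    | Sum.inr e => G.s e.1
  emap := fun e => e.1
  src := fun _ => rfl
  tgt := fun e => e.2.symm

/-- The graph with a single vertex and no edges. -/
def singleGraph : NetGraph where
  V := Unit
  E := Empty
  s := Empty.elim
  t := Empty.elim

/-- The inclusion `ι_a : {a} → G`. -/
def NetGraph.iota (G : NetGraph) (a : G.V) : GraphHom singleGraph G :=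
  ⟨fun _ => a, Empty.elim, fun e => e.elim, fun e => e.elim⟩

/-- The inclusion `j_a : {a} → I(a)`. -/
def NetGraph.jmap (G : NetGraph) (a : G.V) : GraphHom singleGraph (G.inputTree a) :=
  ⟨fun _ => Sum.inl (), Empty.elim, fun e => e.elim, fun e => e.elim⟩

/-- The induced map of input trees `φ_a : I(a) → I(φ(a))`. -/
def GraphHom.inputHom {G G' : NetGraph} (φ : GraphHom G G') (a : G.V) :
    GraphHom (G.inputTree a) (G'.inputTree (φ.vmap a)) where
  vmap := fun v => match v with
    | Sum.inl _ => Sum.inl ()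
    | Sum.inr e => Sum.inr ⟨φ.emap e.1, by rw [← φ.tgt, e.2]⟩
  emap := fun e => ⟨φ.emap e.1, by rw [← φ.tgt, e.2]⟩
  src := fun _ => rfl
  tgt := fun _ => rfl

/-- A graph fibration: for every vertex `a` of `G` and every edge `e'` of `G'`
ending at `φ(a)` there is a unique edge `e` of `G` ending at `a` with `φ(e) = e'`. -/
def IsFibration {G G' : NetGraph} (φ : GraphHom G G') : Prop :=
  ∀ (a : G.V) (e' : G'.E), G'.t e' = φ.vmap a →
    ∃! e : G.E, G.t e = a ∧ φ.emap e = e'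

open Manifold Topology

section PiManifoldLemmas

open Set Bundle

variable {ι : Type} [Fintype ι]
  {E : ι → Type} [∀ i, NormedAddCommGroup (E i)] [∀ i, NormedSpace ℝ (E i)]
  {H : ι → Type} [∀ i, TopologicalSpace (H i)]
  {I : ∀ i, ModelWithCorners ℝ (E i) (H i)}
  {M : ι → Type} [∀ i, TopologicalSpace (M i)] [∀ i, ChartedSpace (H i) (M i)]
  {n : ℕ∞}

lemma range_pi_model :
    Set.range (⇑(ModelWithCorners.pi I)) = Set.pi Set.univ (fun i => Set.range (I i)) := by
  ext v
  constructor
  · rintro ⟨y, rfl⟩ i _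
    exact ⟨y i, rfl⟩
  · intro hv
    choose y hy using fun i => hv i (Set.mem_univ i)
    exact ⟨y, funext hy⟩

/-- Evaluation at a coordinate is smooth on a product manifold. -/
lemma contMDiff_eval_pi (i : ι) :
    ContMDiff (ModelWithCorners.pi I) (I i) n (fun x : ∀ j, M j => x i) := by
  intro x
  rw [contMDiffAt_iff]
  refine ⟨(continuous_apply i).continuousAt, ?_⟩
  have hev : ContDiffWithinAt ℝ n (fun z : ∀ j, E j => z i)
      (Set.range (ModelWithCorners.pi I)) (extChartAt (ModelWithCorners.pi I) x x) :=
    (ContinuousLinearMap.proj (R := ℝ) (φ := E) i).contDiff.contDiffWithinAt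
  refine hev.congr_of_eventuallyEq ?_ ?_
  · filter_upwards [extChartAt_target_mem_nhdsWithin (I := ModelWithCorners.pi I) x] with z hz
    exact congrFun ((extChartAt (ModelWithCorners.pi I) x).right_inv hz) i
  · exact congrFun ((extChartAt (ModelWithCorners.pi I) x).right_inv
      ((extChartAt (ModelWithCorners.pi I) x).map_source (mem_extChartAt_source x))) i

/-- A map into a product manifold is smooth if all its components are. -/
lemma ContMDiffAt.pi_mfd {F : Type} [NormedAddCommGroup F] [NormedSpace ℝ F]
    {G : Type} [TopologicalSpace G] {J : ModelWithCorners ℝ F G}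
    {N : Type} [TopologicalSpace N] [ChartedSpace G N]
    {f : N → ∀ i, M i} {x : N}
    (h : ∀ i, ContMDiffAt J (I i) n (fun y => f y i) x) :
    ContMDiffAt J (ModelWithCorners.pi I) n f x := by
  simp only [contMDiffAt_iff] at h ⊢
  refine ⟨continuousAt_pi.2 fun i => (h i).1, ?_⟩
  exact contDiffWithinAt_pi.2 fun i => (h i).2

/-- The manifold derivative of evaluation at a coordinate is the projection. -/
lemma hasMFDerivAt_eval_pi (i : ι) (x : ∀ j, M j) :
    HasMFDerivAt (ModelWithCorners.pi I) (I i) (fun y => y i) x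
      (ContinuousLinearMap.proj (R := ℝ) (φ := E) i) := by
  refine ⟨(continuous_apply i).continuousAt, ?_⟩
  have hev : HasFDerivWithinAt (fun z : ∀ j, E j => z i)
      (ContinuousLinearMap.proj (R := ℝ) (φ := E) i)
      (Set.range (ModelWithCorners.pi I)) (extChartAt (ModelWithCorners.pi I) x x) :=
    (ContinuousLinearMap.proj (R := ℝ) (φ := E) i).hasFDerivWithinAt
  refine hev.congr_of_eventuallyEq ?_ ?_
  · filter_upwards [extChartAt_target_mem_nhdsWithin (I := ModelWithCorners.pi I) x] with z hz
    exact congrFun ((extChartAt (ModelWithCorners.pi I) x).right_inv hz) i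
  · exact congrFun ((extChartAt (ModelWithCorners.pi I) x).right_inv
      ((extChartAt (ModelWithCorners.pi I) x).map_source (mem_extChartAt_source x))) i

lemma mfderiv_eval_pi (i : ι) (x : ∀ j, M j) (v : ∀ j, E j) :
    mfderiv (ModelWithCorners.pi I) (I i) (fun y => y i) x v = v i := by
  rw [(hasMFDerivAt_eval_pi i x).mfderiv]
  rfl

/-- The tangent-bundle trivialization of a product manifold acts componentwise. -/
lemma tangent_triv_pi [∀ i, IsManifold (I i) (⊤ : ℕ∞) (M i)]
    [IsManifold (ModelWithCorners.pi I) (⊤ : ℕ∞) (∀ i, M i)]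
    (x₀ x : ∀ i, M i)
    (hx : ∀ i, x i ∈ (chartAt (H i) (x₀ i)).source) (v : ∀ i, E i) :
    (trivializationAt (∀ i, E i) (TangentSpace (ModelWithCorners.pi I)) x₀
        ⟨x, v⟩).2 =
      fun i => (trivializationAt (E i) (TangentSpace (I i)) (x₀ i) ⟨x i, v i⟩).2 := by
  have hF : ∀ i, DifferentiableWithinAt ℝ
      ((chartAt (H i) (x₀ i)).extend (I i) ∘ ((chartAt (H i) (x i)).extend (I i)).symm)
      (Set.range (I i)) ((chartAt (H i) (x i)).extend (I i) (x i)) := fun i =>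
    by exact (OpenPartialHomeomorph.contDiffWithinAt_extend_coord_change' (I := I i) (n := ((⊤ : ℕ∞) : WithTop ℕ∞))
      (IsManifold.subset_maximalAtlas (chart_mem_atlas _ (x i)))
      (IsManifold.subset_maximalAtlas (chart_mem_atlas _ (x₀ i)))
      (mem_chart_source _ _) (hx i)).differentiableWithinAt (by simp)
  set D : ∀ i, E i →L[ℝ] E i := fun i =>
    fderivWithin ℝ
      ((chartAt (H i) (x₀ i)).extend (I i) ∘ ((chartAt (H i) (x i)).extend (I i)).symm)
      (Set.range (I i)) ((chartAt (H i) (x i)).extend (I i) (x i)) with hDdef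
  have hmaps : ∀ i, Set.MapsTo (fun z : ∀ j, E j => z i)
      (Set.range (⇑(ModelWithCorners.pi I))) (Set.range (I i)) := by
    intro i z hz
    rw [range_pi_model] at hz
    exact hz i (Set.mem_univ i)
  have hD : HasFDerivWithinAt
      ((chartAt (ModelPi H) x₀).extend (ModelWithCorners.pi I) ∘
        ((chartAt (ModelPi H) x).extend (ModelWithCorners.pi I)).symm)
      (ContinuousLinearMap.pi fun i =>
        (D i).comp (ContinuousLinearMap.proj (R := ℝ) (φ := E) i))
      (Set.range (ModelWithCorners.pi I))
      ((chartAt (ModelPi H) x).extend (ModelWithCorners.pi I) x) := by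
    apply hasFDerivWithinAt_pi''
    intro i
    rw [ContinuousLinearMap.proj_pi]
    exact ((hF i).hasFDerivWithinAt).comp
      (x := (chartAt (ModelPi H) x).extend (ModelWithCorners.pi I) x)
      ((ContinuousLinearMap.proj (R := ℝ) (φ := E) i).hasFDerivWithinAt) (hmaps i)
  have hpt : (chartAt (ModelPi H) x).extend (ModelWithCorners.pi I) x ∈
      Set.range (⇑(ModelWithCorners.pi I)) := Set.mem_range_self _
  have huniq := (ModelWithCorners.pi I).uniqueDiffOn _ hpt
  have heq : (trivializationAt (∀ i, E i) (TangentSpace (ModelWithCorners.pi I)) x₀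
      ⟨x, v⟩).2 =
      fderivWithin ℝ
        ((chartAt (ModelPi H) x₀).extend (ModelWithCorners.pi I) ∘
          ((chartAt (ModelPi H) x).extend (ModelWithCorners.pi I)).symm)
        (Set.range (ModelWithCorners.pi I))
        ((chartAt (ModelPi H) x).extend (ModelWithCorners.pi I) x) v := rfl
  rw [heq, hD.fderivWithin huniq]
  rfl

end PiManifoldLemmas



/-- For a network of manifolds `(G,P)` there is a linear interconnection map
`𝓘 : ∏_{a} Control(ℙI(a) → P a) → Γ(T ℙG)` uniquely characterized componentwise by
`D(ℙι_a) ∘ 𝓘(w) = w_a ∘ ℙξ_a` for every vertex `a`; it sends tuples of smooth open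
systems to smooth vector fields. -/
theorem interconnection_exists_unique_linear {G : NetGraph}
    (E : G.V → Type) [∀ a, NormedAddCommGroup (E a)] [∀ a, NormedSpace ℝ (E a)]
    (H : G.V → Type) [∀ a, TopologicalSpace (H a)]
    (I : ∀ a, ModelWithCorners ℝ (E a) (H a))
    (M : G.V → Type) [∀ a, TopologicalSpace (M a)] [∀ a, ChartedSpace (H a) (M a)]
    [∀ a, IsManifold (I a) (⊤ : ℕ∞) (M a)]
    [IsManifold (ModelWithCorners.pi I) (⊤ : ℕ∞) (∀ b : G.V, M b)] :
    ∃ Int : (∀ a : G.V, ((∀ v : (G.inputTree a).V, M ((G.xi a).vmap v)) → E a))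
        →ₗ[ℝ] ((∀ b : G.V, M b) → ∀ a : G.V, E a),
      ∀ w : ∀ a : G.V, (∀ v : (G.inputTree a).V, M ((G.xi a).vmap v)) → E a,
        -- if each `w a` is a smooth open system then `Int w` is a (smooth) vector field
        ((∀ a : G.V, ContMDiff
              (ModelWithCorners.pi fun v : (G.inputTree a).V => I ((G.xi a).vmap v))
              (I a).tangent (⊤ : ℕ∞)
              (fun y => (⟨y (Sum.inl ()), w a y⟩ : TangentBundle (I a) (M a)))) →
          ContMDiff (ModelWithCorners.pi I) (ModelWithCorners.pi I).tangent (⊤ : ℕ∞)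
            (fun x => (⟨x, Int w x⟩ : TangentBundle (ModelWithCorners.pi I) (∀ b, M b)))) ∧
        -- characterization `D(ℙι_a) ∘ I(w) = w_a ∘ ℙξ_a`
        (∀ (a : G.V) (x : ∀ b : G.V, M b),
          mfderiv (ModelWithCorners.pi I) (I a) (fun y => y a) x (Int w x) =
            w a (Pmap M (G.xi a) x)) ∧
        -- uniqueness
        (∀ X : (∀ b : G.V, M b) → ∀ a : G.V, E a,
          (∀ (a : G.V) (x : ∀ b : G.V, M b),
            mfderiv (ModelWithCorners.pi I) (I a) (fun y => y a) x (X x) =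
              w a (Pmap M (G.xi a) x)) → X = Int w) := by
  classical
  refine ⟨{ toFun := fun w => fun x a => w a (Pmap M (G.xi a) x),
            map_add' := fun w w' => rfl,
            map_smul' := fun c w => rfl }, ?_⟩
  intro w
  refine ⟨?_, ?_, ?_⟩
  · -- smoothness
    intro hw
    intro x₀
    set f : (∀ b : G.V, M b) → ∀ a : G.V, E a :=
      fun x a => w a (Pmap M (G.xi a) x) with hf
    have key : ∀ a : G.V, ContMDiff (ModelWithCorners.pi I) (I a).tangent (⊤ : ℕ∞)
        (fun x : ∀ b : G.V, M b =>
          (⟨x a, f x a⟩ : TangentBundle (I a) (M a))) := by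
      intro a
      have hPxi : ContMDiff (ModelWithCorners.pi I)
          (ModelWithCorners.pi fun v : (G.inputTree a).V => I ((G.xi a).vmap v)) (⊤ : ℕ∞)
          (Pmap M (G.xi a)) := fun x =>
        ContMDiffAt.pi_mfd fun v => (contMDiff_eval_pi ((G.xi a).vmap v)).contMDiffAt
      exact (hw a).comp hPxi
    apply (Bundle.contMDiffAt_totalSpace (x₀ := x₀)).2
    refine ⟨contMDiffAt_id, ?_⟩
    apply contMDiffAt_pi_space.2
    intro a
    have hcomp : ContMDiffAt (ModelWithCorners.pi I) 𝓘(ℝ, E a) (⊤ : ℕ∞)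
        (fun x => (trivializationAt (E a) (TangentSpace (I a)) (x₀ a)
          ⟨x a, f x a⟩).2) x₀ :=
      ((Bundle.contMDiffAt_totalSpace (x₀ := x₀)).1 ((key a).contMDiffAt)).2
    refine hcomp.congr_of_eventuallyEq ?_
    filter_upwards [(chartAt (ModelPi H) x₀).open_source.mem_nhds
      (mem_chart_source _ x₀)] with x hxs
    have hxs' : ∀ b, x b ∈ (chartAt (H b) (x₀ b)).source := fun b => hxs b (Set.mem_univ b)
    exact congrFun (tangent_triv_pi x₀ x hxs' (f x)) a
  · -- characterization
    intro a x
    exact mfderiv_eval_pi a x _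
  · -- uniqueness
    intro X hX
    funext x a
    exact (mfderiv_eval_pi a x (X x)).symm.trans (hX a x)
end

section
/- Let φ : (G,P) → (G',P') be a fibration of networks of manifolds. Then the pullback map φ* : Ctrl(G',P') → Ctrl(G,P), defined componentwise by (φ*w')_a := D(P(φ|_{a})) ∘ w'_{φ(a)} ∘ (Pφ_a)⁻¹, is a well-defined linear map. -/
/-- For a graph fibration, the inverse of the bijection `t⁻¹(a) → t⁻¹(φ(a))`. -/
noncomputable def fibSection {G G' : NetGraph} {φ : GraphHom G G'} (hφ : IsFibration φ)
    (a : G.V) (e' : {e' : G'.E // G'.t e' = φ.vmap a}) : {e : G.E // G.t e = a} :=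
  ⟨(hφ a e'.1 e'.2).exists.choose, (hφ a e'.1 e'.2).exists.choose_spec.1⟩

theorem fibSection_spec {G G' : NetGraph} {φ : GraphHom G G'} (hφ : IsFibration φ)
    (a : G.V) (e' : {e' : G'.E // G'.t e' = φ.vmap a}) :
    φ.emap (fibSection hφ a e').1 = e'.1 :=
  (hφ a e'.1 e'.2).exists.choose_spec.2

/-- The pullback of a tuple of open systems along a graph fibration:
`(φ*w')_a = w'_{φ(a)} ∘ (ℙφ_a)⁻¹`, written out explicitly using the inverse of the
input tree isomorphism `φ_a : I(a) ≅ I(φ(a))`. -/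
noncomputable def pullbackCtrl {G G' : NetGraph} {φ : GraphHom G G'} (hφ : IsFibration φ)
    (M' : G'.V → Type _) (E' : G'.V → Type _)
    (w' : ∀ a' : G'.V, (∀ v : (G'.inputTree a').V, M' ((G'.xi a').vmap v)) → E' a')
    (a : G.V) (y : ∀ v : (G.inputTree a).V, M' (φ.vmap ((G.xi a).vmap v))) :
    E' (φ.vmap a) :=
  w' (φ.vmap a) (fun v => match v with
    | Sum.inl _ => y (Sum.inl ())
    | Sum.inr e' =>
        cast (congrArg M' ((φ.src _).trans (congrArg G'.s (fibSection_spec hφ a e'))))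
          (y (Sum.inr (fibSection hφ a e'))))

open Manifold Topology

section Aux

theorem pi_target_mem_aux {ι : Type} [Fintype ι]
    {V : Type} {E : V → Type} [∀ v, NormedAddCommGroup (E v)] [∀ v, NormedSpace ℝ (E v)]
    {H : V → Type} [∀ v, TopologicalSpace (H v)]
    {I : ∀ v, ModelWithCorners ℝ (E v) (H v)}
    {M : V → Type} [∀ v, TopologicalSpace (M v)] [∀ v, ChartedSpace (H v) (M v)]
    {f : ι → V} {x : ∀ i, M (f i)} {z : ∀ i, E (f i)}
    (hz : z ∈ (extChartAt (ModelWithCorners.pi fun i => I (f i)) x).target) (j : ι) :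
    z j ∈ (extChartAt (I (f j)) (x j)).target := by
  rw [extChartAt_target] at hz ⊢
  simp only [piChartedSpace_chartAt, OpenPartialHomeomorph.pi_toPartialHomeomorph,
    PartialEquiv.pi_target, ModelWithCorners.pi] at hz
  obtain ⟨h1, h2⟩ := hz
  refine ⟨h1 j (Set.mem_univ j), ?_⟩
  obtain ⟨w, hw⟩ := h2
  exact ⟨w j, congrFun hw j⟩

theorem reindex_contMDiff_aux {ι κ : Type} [Fintype ι] [Fintype κ]
    {V : Type} (E : V → Type) [∀ v, NormedAddCommGroup (E v)] [∀ v, NormedSpace ℝ (E v)]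
    (H : V → Type) [∀ v, TopologicalSpace (H v)]
    (I : ∀ v, ModelWithCorners ℝ (E v) (H v))
    (M : V → Type) [∀ v, TopologicalSpace (M v)] [∀ v, ChartedSpace (H v) (M v)]
    (f : ι → V) (σ : κ → ι) :
    ContMDiff (ModelWithCorners.pi fun i => I (f i))
      (ModelWithCorners.pi fun k => I (f (σ k))) ⊤
      (fun (y : ∀ i, M (f i)) (k : κ) => y (σ k)) := by
  intro x
  rw [ContMDiffAt, contMDiffWithinAt_iff']
  constructor
  · exact (continuous_pi fun k => continuous_apply (σ k)).continuousWithinAt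
  · have hL : ContDiff ℝ ⊤ (fun (z : ∀ i, E (f i)) (k : κ) => z (σ k)) :=
      (ContinuousLinearMap.pi fun k =>
        ContinuousLinearMap.proj (R := ℝ) (φ := fun i => E (f i)) (σ k)).contDiff
    refine hL.contDiffWithinAt.congr (fun z hz => ?_) ?_
    · funext k
      show extChartAt (I (f (σ k))) (x (σ k))
        ((extChartAt (I (f (σ k))) (x (σ k))).symm (z (σ k))) = z (σ k)
      exact PartialEquiv.right_inv _ (pi_target_mem_aux hz.1 (σ k))
    · funext k
      show extChartAt (I (f (σ k))) (x (σ k))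
        ((extChartAt (I (f (σ k))) (x (σ k))).symm
          (extChartAt (I (f (σ k))) (x (σ k)) (x (σ k)))) = _
      rw [PartialEquiv.left_inv _ (mem_extChartAt_source _)]
      rfl

theorem reindex_contMDiff_aux' {ι κ : Type} [Fintype ι] [Fintype κ]
    {V : Type} (E : V → Type) [∀ v, NormedAddCommGroup (E v)] [∀ v, NormedSpace ℝ (E v)]
    (H : V → Type) [∀ v, TopologicalSpace (H v)]
    (I : ∀ v, ModelWithCorners ℝ (E v) (H v))
    (M : V → Type) [∀ v, TopologicalSpace (M v)] [∀ v, ChartedSpace (H v) (M v)]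
    (f : ι → V) (g : κ → V) (σ : κ → ι) (h : ∀ k, f (σ k) = g k) :
    ContMDiff (ModelWithCorners.pi fun i => I (f i))
      (ModelWithCorners.pi fun k => I (g k)) ⊤
      (fun (y : ∀ i, M (f i)) (k : κ) => cast (congrArg M (h k)) (y (σ k))) := by
  have hg : g = fun k => f (σ k) := funext fun k => (h k).symm
  subst hg
  exact reindex_contMDiff_aux E H I M f σ

end Aux

/-- For a fibration `φ : (G,P) → (G',P')` of networks of manifolds, the
pullback map `φ* : Ctrl(G',P') → Ctrl(G,P)`, with components
`(φ*w')_a = D(ℙ(φ|_a)) ∘ w'_{φ(a)} ∘ (ℙφ_a)⁻¹` (here `ℙ(φ|_a)` is the identity and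
`ℙφ_a` is the diffeomorphism induced by the input tree isomorphism `φ_a`), is a
well-defined linear map: it is linear, its components are characterized by
`(φ*w')_a (y) = w'_{φ(a)} (z)` whenever `z ∘ φ_a = y`, and it sends smooth open systems to
smooth open systems. -/


theorem pullback_well_defined_linear {G G' : NetGraph} (φ : GraphHom G G')
    (hφ : IsFibration φ)
    (E' : G'.V → Type) [∀ a', NormedAddCommGroup (E' a')] [∀ a', NormedSpace ℝ (E' a')]
    (H' : G'.V → Type) [∀ a', TopologicalSpace (H' a')]
    (I' : ∀ a', ModelWithCorners ℝ (E' a') (H' a'))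
    (M' : G'.V → Type) [∀ a', TopologicalSpace (M' a')] [∀ a', ChartedSpace (H' a') (M' a')]
    [∀ a', IsManifold (I' a') ((⊤ : ℕ∞) : WithTop ℕ∞) (M' a')] :
    ∃ pull :
      (∀ a' : G'.V, (∀ v : (G'.inputTree a').V, M' ((G'.xi a').vmap v)) → E' a') →ₗ[ℝ]
      (∀ a : G.V, (∀ v : (G.inputTree a).V, M' (φ.vmap ((G.xi a).vmap v))) →
        E' (φ.vmap a)),
      -- characterization: `(φ*w')_a (y) = w'_{φ(a)} ((ℙφ_a)⁻¹⁻¹... z)` whenever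
      -- `z ∘ ℙφ_a = y`, i.e. `z (φ_a v) = y v` for all vertices `v` of `I(a)`
      (∀ (w' : ∀ a' : G'.V,
          (∀ v : (G'.inputTree a').V, M' ((G'.xi a').vmap v)) → E' a')
        (a : G.V) (y : ∀ v : (G.inputTree a).V, M' (φ.vmap ((G.xi a).vmap v)))
        (z : ∀ v' : (G'.inputTree (φ.vmap a)).V, M' ((G'.xi (φ.vmap a)).vmap v')),
        (∀ v : (G.inputTree a).V, HEq (z ((φ.inputHom a).vmap v)) (y v)) →
          pull w' a y = w' (φ.vmap a) z) ∧
      -- well-definedness: smooth open systems pull back to smooth open systems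
      (∀ w' : ∀ a' : G'.V,
          (∀ v : (G'.inputTree a').V, M' ((G'.xi a').vmap v)) → E' a',
        (∀ a' : G'.V, ContMDiff
            (ModelWithCorners.pi fun v : (G'.inputTree a').V => I' ((G'.xi a').vmap v))
            (I' a').tangent (⊤ : ℕ∞)
            (fun y => (⟨y (Sum.inl ()), w' a' y⟩ : TangentBundle (I' a') (M' a')))) →
          ∀ a : G.V, ContMDiff
            (ModelWithCorners.pi fun v : (G.inputTree a).V =>
              I' (φ.vmap ((G.xi a).vmap v)))
            (I' (φ.vmap a)).tangent (⊤ : ℕ∞)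
            (fun y => (⟨y (Sum.inl ()), pull w' a y⟩ :
              TangentBundle (I' (φ.vmap a)) (M' (φ.vmap a))))) := by
  classical
  refine ⟨{ toFun := pullbackCtrl hφ M' E'
            map_add' := fun w1 w2 => rfl
            map_smul' := fun c w => rfl }, fun w' a y z hz => ?_, fun w' hw' a => ?_⟩
  · refine congrArg (w' (φ.vmap a)) (funext fun v' => ?_)
    match v' with
    | Sum.inl u =>
      exact (eq_of_heq (hz (Sum.inl ()))).symm
    | Sum.inr e' =>
      have h1 : HEq (z (Sum.inr ⟨φ.emap (fibSection hφ a e').1,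
          (φ.tgt (fibSection hφ a e').1).symm.trans
            (congrArg φ.vmap (fibSection hφ a e').2)⟩))
          (y (Sum.inr (fibSection hφ a e'))) := hz (Sum.inr (fibSection hφ a e'))
      have h2 : (⟨φ.emap (fibSection hφ a e').1,
          (φ.tgt (fibSection hφ a e').1).symm.trans
            (congrArg φ.vmap (fibSection hφ a e').2)⟩ :
            {e'' : G'.E // G'.t e'' = φ.vmap a}) = e' :=
        Subtype.ext (fibSection_spec hφ a e')
      rw [h2] at h1
      exact eq_of_heq ((cast_heq _ _).trans h1.symm)
  · have hR := reindex_contMDiff_aux' E' H' I' M'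
      (fun v : (G.inputTree a).V => φ.vmap ((G.xi a).vmap v))
      (fun v' : (G'.inputTree (φ.vmap a)).V => (G'.xi (φ.vmap a)).vmap v')
      (fun v' => match v' with
        | Sum.inl _ => Sum.inl ()
        | Sum.inr e' => Sum.inr (fibSection hφ a e'))
      (fun v' => match v' with
        | Sum.inl _ => rfl
        | Sum.inr e' => (φ.src _).trans (congrArg G'.s (fibSection_spec hφ a e')))
    have key := (hw' (φ.vmap a)).comp (hR.of_le le_top)
    have hfun : ((fun y => (⟨y (Sum.inl ()), w' (φ.vmap a) y⟩ :
          TangentBundle (I' (φ.vmap a)) (M' (φ.vmap a)))) ∘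
        (fun (y : ∀ v : (G.inputTree a).V, M' (φ.vmap ((G.xi a).vmap v)))
          (k : (G'.inputTree (φ.vmap a)).V) => cast (congrArg M'
            ((match k with
              | Sum.inl _ => rfl
              | Sum.inr e' => (φ.src _).trans (congrArg G'.s (fibSection_spec hφ a e')) :
              φ.vmap ((G.xi a).vmap (match k with
                | Sum.inl _ => Sum.inl ()
                | Sum.inr e' => Sum.inr (fibSection hφ a e'))) =
              (G'.xi (φ.vmap a)).vmap k)))
            (y (match k with
              | Sum.inl _ => Sum.inl ()
              | Sum.inr e' => Sum.inr (fibSection hφ a e'))))) =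
        (fun y => (⟨y (Sum.inl ()), pullbackCtrl hφ M' E' w' a y⟩ :
          TangentBundle (I' (φ.vmap a)) (M' (φ.vmap a)))) := by
      funext y
      exact congrArg
        (fun t => (⟨y (Sum.inl ()), w' (φ.vmap a) t⟩ :
          TangentBundle (I' (φ.vmap a)) (M' (φ.vmap a))))
        (funext fun v' => match v' with
          | Sum.inl _ => rfl
          | Sum.inr e' => rfl)
    exact hfun ▸ key
end

section
/- Let φ : (G,P) → (G',P') be a fibration of networks of manifolds and w' ∈ Ctrl(G',P') a tuple of open systems. Then the induced map Pφ : PG' → PG intertwines the interconnected vector fields: D(Pφ) ∘ I'(w') = I(φ*w') ∘ Pφ, where I', I are the interconnection maps of (G',P') and (G,P). Hence Pφ : (PG', I'(w')) → (PG, I(φ*w')) is a map of dynamical systems. -/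
open Manifold Topology

open Set Filter

theorem hasMFDerivAt_reindex {ι κ : Type} [Fintype ι] [Fintype κ] (σ : κ → ι)
    (E : ι → Type) [∀ i, NormedAddCommGroup (E i)] [∀ i, NormedSpace ℝ (E i)]
    (H : ι → Type) [∀ i, TopologicalSpace (H i)]
    (I : ∀ i, ModelWithCorners ℝ (E i) (H i))
    (M : ι → Type) [∀ i, TopologicalSpace (M i)] [∀ i, ChartedSpace (H i) (M i)]
    (x : ∀ i, M i) :
    HasMFDerivAt (ModelWithCorners.pi I) (ModelWithCorners.pi fun k => I (σ k))
      (fun y k => y (σ k)) x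
      (ContinuousLinearMap.pi fun k => ContinuousLinearMap.proj (R := ℝ) (σ k)) := by
  constructor
  · exact (continuous_pi fun k => continuous_apply (σ k)).continuousAt
  · set L : (∀ i, E i) →L[ℝ] (∀ k, E (σ k)) :=
      ContinuousLinearMap.pi fun k => ContinuousLinearMap.proj (R := ℝ) (σ k)
    have hS : (univ.pi fun i => (extChartAt (I i) (x i)).target) ∈
        𝓝[range (ModelWithCorners.pi I)] (extChartAt (ModelWithCorners.pi I) x x) := by
      have hr : range (ModelWithCorners.pi I) = univ.pi fun i => range (I i) := by
        rw [show (ModelWithCorners.pi I : (∀ i, H i) → ∀ i, E i) =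
          Pi.map fun i => (I i : H i → E i) from rfl, Set.range_piMap]
      rw [hr, show (univ.pi fun i => (extChartAt (I i) (x i)).target) =
        ⋂ i, (fun y : ∀ i, E i => y i) ⁻¹' (extChartAt (I i) (x i)).target by
          ext y; simp [Set.mem_pi], nhdsWithin_pi_univ_eq]
      refine iInter_mem.2 fun i => ?_
      exact mem_iInf_of_mem i (preimage_mem_comap (extChartAt_target_mem_nhdsWithin (x i)))
    have key : ∀ y ∈ univ.pi fun i => (extChartAt (I i) (x i)).target,
        writtenInExtChartAt (ModelWithCorners.pi I) (ModelWithCorners.pi fun k => I (σ k)) x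
          (fun y k => y (σ k)) y = L y := by
      intro y hy
      funext k
      exact (extChartAt (I (σ k)) (x (σ k))).right_inv (hy (σ k) (mem_univ _))
    refine (L.hasFDerivAt.hasFDerivWithinAt).congr_of_eventuallyEq
      (eventually_of_mem hS key) (key _ fun i _ => mem_extChartAt_target (x i))


/-- main theorem: For a fibration `φ : (G,P) → (G',P')` of networks of
manifolds and a tuple `w' ∈ Ctrl(G',P')` of (smooth) open systems, the induced map
`ℙφ : ℙG' → ℙG` intertwines the interconnected vector fields:
`D(ℙφ) ∘ 𝓘'(w') = 𝓘(φ*w') ∘ ℙφ`, where the interconnected vector field `𝓘(w)` has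
`a`-component `w_a ∘ ℙξ_a`.  Hence `ℙφ : (ℙG', 𝓘'(w')) → (ℙG, 𝓘(φ*w'))` is a map of
dynamical systems. -/
theorem fibration_map_of_dynamical_systems {G G' : NetGraph} (φ : GraphHom G G')
    (hφ : IsFibration φ)
    (E' : G'.V → Type) [∀ a', NormedAddCommGroup (E' a')] [∀ a', NormedSpace ℝ (E' a')]
    (H' : G'.V → Type) [∀ a', TopologicalSpace (H' a')]
    (I' : ∀ a', ModelWithCorners ℝ (E' a') (H' a'))
    (M' : G'.V → Type) [∀ a', TopologicalSpace (M' a')] [∀ a', ChartedSpace (H' a') (M' a')]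
    [∀ a', IsManifold (I' a') (⊤ : ℕ∞) (M' a')]
    (w' : ∀ a' : G'.V, (∀ v : (G'.inputTree a').V, M' ((G'.xi a').vmap v)) → E' a')
    (hw' : ∀ a' : G'.V, ContMDiff
        (ModelWithCorners.pi fun v : (G'.inputTree a').V => I' ((G'.xi a').vmap v))
        (I' a').tangent (⊤ : ℕ∞)
        (fun y => (⟨y (Sum.inl ()), w' a' y⟩ : TangentBundle (I' a') (M' a')))) :
    ∀ x' : ∀ a' : G'.V, M' a',
      mfderiv (ModelWithCorners.pi I') (ModelWithCorners.pi fun a => I' (φ.vmap a))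
          (Pmap M' φ) x' (fun a' => w' a' (Pmap M' (G'.xi a') x')) =
        fun a : G.V => pullbackCtrl hφ M' E' w' a
          (Pmap (fun b => M' (φ.vmap b)) (G.xi a) (Pmap M' φ x')) := by
  intro x'
  have hd := (hasMFDerivAt_reindex φ.vmap E' H' I' M' x').mfderiv
  have hc : ∀ {b c : G'.V} (h : b = c), cast (congrArg M' h) (x' b) = x' c := by
    intro b c h; cases h; rfl
  rw [show Pmap M' φ = (fun y a => y (φ.vmap a)) from rfl, hd]
  funext a
  show w' (φ.vmap a) (fun v => x' ((G'.xi (φ.vmap a)).vmap v)) = _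
  unfold pullbackCtrl
  refine congrArg (w' (φ.vmap a)) (funext fun v => ?_)
  match v with
  | Sum.inl _ => rfl
  | Sum.inr e' => exact (hc ((φ.src _).trans (congrArg G'.s (fibSection_spec hφ a e')))).symm
end
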